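/- Let v = (v₁,v₂) ∈ ℝ² be a unit vector with v₁v₂ ≠ 0 and v₁ ≠ v₂. Then the one-dimensional subspace spanned by v is not closed under the unit contraction: there exists c ∈ ℝ such that (cv)# is not a scalar multiple of v, where (cv)# is the componentwise unit contraction. -/

import Mathlib

/-- The componentwise unit contraction on `ℝ²`. -/
noncomputable def unitContrPair (ξ : ℝ × ℝ) : ℝ × ℝ :=
  (min (max ξ.1 0) 1, min (max ξ.2 0) 1)

/-- Let `v = (v₁,v₂) ∈ ℝ²` be a unit vector with `v₁v₂ ≠ 0` and `v₁ ≠ v₂`.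
Then the line spanned by `v` is not closed under the unit contraction: there is
`c ∈ ℝ` such that `(c • v)#` is not a scalar multiple of `v`. -/
theorem span_not_closed_under_unit_contraction (v : ℝ × ℝ)
    (hunit : v.1 ^ 2 + v.2 ^ 2 = 1) (hne : v.1 * v.2 ≠ 0) (hdiff : v.1 ≠ v.2) :
    ∃ c : ℝ, ∀ d : ℝ, unitContrPair (c • v) ≠ d • v := by
  have h1 : v.1 ≠ 0 := fun h => hne (by simp [h])
  have h2 : v.2 ≠ 0 := fun h => hne (by simp [h])
  rcases lt_or_gt_of_ne hne with hneg | hpos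
  · refine ⟨1, fun d hd => ?_⟩
    rw [one_smul] at hd
    have hd1 : min (max v.1 0) 1 = d * v.1 := congrArg Prod.fst hd
    have hd2 : min (max v.2 0) 1 = d * v.2 := congrArg Prod.snd hd
    rcases mul_neg_iff.mp hneg with ⟨ha, hb⟩ | ⟨ha, hb⟩
    · -- v.1 > 0, v.2 < 0
      rw [max_eq_right hb.le, min_eq_left zero_le_one] at hd2
      have hd0 : d = 0 := by
        rcases mul_eq_zero.mp hd2.symm with h | h
        · exact h
        · exact absurd h h2
      rw [hd0, zero_mul, max_eq_left ha.le] at hd1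
      exact absurd hd1 (ne_of_gt (lt_min ha one_pos))
    · -- v.1 < 0, v.2 > 0
      rw [max_eq_right ha.le, min_eq_left zero_le_one] at hd1
      have hd0 : d = 0 := by
        rcases mul_eq_zero.mp hd1.symm with h | h
        · exact h
        · exact absurd h h1
      rw [hd0, zero_mul, max_eq_left hb.le] at hd2
      exact absurd hd2 (ne_of_gt (lt_min hb one_pos))
  · -- v.1 * v.2 > 0
    set c : ℝ := 1 / v.1 + 1 / v.2 with hc
    have hratio : 0 < v.1 / v.2 := by
      have : v.1 / v.2 = v.1 * v.2 / v.2 ^ 2 := by field_simp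
      rw [this]
      exact div_pos hpos (by positivity)
    have hratio' : 0 < v.2 / v.1 := by
      have : v.2 / v.1 = v.1 * v.2 / v.1 ^ 2 := by field_simp
      rw [this]
      exact div_pos hpos (by positivity)
    have hcv1 : 1 ≤ c * v.1 := by
      have : c * v.1 = 1 + v.1 / v.2 := by
        field_simp [hc]
        rw [hc]; field_simp
      rw [this]; linarith
    have hcv2 : 1 ≤ c * v.2 := by
      have : c * v.2 = 1 + v.2 / v.1 := by
        field_simp [hc]
        rw [hc]; field_simp; ring
      rw [this]; linarith
    refine ⟨c, fun d hd => ?_⟩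
    have hd1 : min (max (c * v.1) 0) 1 = d * v.1 := congrArg Prod.fst hd
    have hd2 : min (max (c * v.2) 0) 1 = d * v.2 := congrArg Prod.snd hd
    rw [max_eq_left (by linarith), min_eq_right hcv1] at hd1
    rw [max_eq_left (by linarith), min_eq_right hcv2] at hd2
    have hd0 : d ≠ 0 := by
      intro h; rw [h, zero_mul] at hd1; exact one_ne_zero hd1
    apply hdiff
    have : d * v.1 = d * v.2 := by rw [← hd1, ← hd2]
    exact mul_left_cancel₀ hd0 this
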